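/- Let m, d, t be natural numbers with t > m + d, F a field, and H₁,…,H_t affine hyperplanes in F^m in general position. Let T ⊆ F^m be the set of all points lying in the intersection of some m of these hyperplanes. Then every nonzero polynomial f ∈ F[X₁,…,X_m] of total degree at most d is nonzero at at least binom(t−d, m) points of T. Consequently, the linear code obtained by evaluating all m-variate polynomials of degree at most d on T (a code of block length binom(t,m) and dimension binom(d+m,m)) has minimum Hamming distance at least binom(t−d, m). -/

import Mathlib

open MvPolynomial

namespace GAP

lemma degree_add' {σ : Type*} (u v : σ →₀ ℕ) : (u + v).degree = u.degree + v.degree := by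
  simp only [Finsupp.degree_eq_weight_one, map_add]

lemma sum_eq_degree {σ : Type*} (d : σ →₀ ℕ) : (d.sum fun _ e => e) = d.degree := rfl

lemma homogeneousComponent_totalDegree_ne_zero {R : Type*} [CommSemiring R] {σ : Type*}
    {p : MvPolynomial σ R} (hp : p ≠ 0) :
    homogeneousComponent p.totalDegree p ≠ 0 := by
  have hne : p.support.Nonempty := by
    rw [Finset.nonempty_iff_ne_empty, Ne, MvPolynomial.support_eq_empty]; exact hp
  obtain ⟨d, hd, hdeg⟩ := Finset.exists_mem_eq_sup p.support hne (fun s => s.sum fun _ e => e)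
  have hdd : d.degree = p.totalDegree := by
    rw [MvPolynomial.totalDegree, hdeg, sum_eq_degree]
  intro h0
  have := MvPolynomial.coeff_homogeneousComponent (σ := σ) p.totalDegree p d
  rw [h0, if_pos hdd] at this
  exact (MvPolynomial.mem_support_iff.mp hd) (by simpa using this.symm)

lemma homogeneousComponent_mul_top {R : Type*} [CommSemiring R] {σ : Type*}
    (p q : MvPolynomial σ R) :
    homogeneousComponent (p.totalDegree + q.totalDegree) (p * q) =
      homogeneousComponent p.totalDegree p * homogeneousComponent q.totalDegree q := by
  classical
  set dp := p.totalDegree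
  set dq := q.totalDegree
  ext d
  rw [MvPolynomial.coeff_homogeneousComponent, MvPolynomial.coeff_mul, MvPolynomial.coeff_mul]
  have key : ∀ uv ∈ Finset.HasAntidiagonal.antidiagonal d,
      coeff (uv.1) (homogeneousComponent dp p) * coeff (uv.2) (homogeneousComponent dq q) =
      if d.degree = dp + dq then coeff uv.1 p * coeff uv.2 q else 0 := by
    rintro ⟨u, v⟩ huv
    rw [Finset.HasAntidiagonal.mem_antidiagonal] at huv
    have hdeg : u.degree + v.degree = d.degree := by rw [← huv, degree_add']
    rw [MvPolynomial.coeff_homogeneousComponent, MvPolynomial.coeff_homogeneousComponent]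
    by_cases hu : u.degree = dp
    · by_cases hv : v.degree = dq
      · rw [if_pos hu, if_pos hv, if_pos (by omega)]
      · rw [if_pos hu, if_neg hv, mul_zero]
        by_cases hD : d.degree = dp + dq
        · have : dq < v.degree := by omega
          have : coeff v q = 0 := MvPolynomial.coeff_eq_zero_of_totalDegree_lt
            (by rw [← sum_eq_degree] at this; simpa [Finsupp.sum] using this)
          rw [if_pos hD, this, mul_zero]
        · rw [if_neg hD]
    · rw [if_neg hu, zero_mul]
      by_cases hD : d.degree = dp + dq
      · rcases Nat.lt_or_ge u.degree dp with h | h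
        · have hv : dq < v.degree := by omega
          have : coeff v q = 0 := MvPolynomial.coeff_eq_zero_of_totalDegree_lt
            (by rw [← sum_eq_degree] at hv; simpa [Finsupp.sum] using hv)
          rw [if_pos hD, this, mul_zero]
        · have hu' : dp < u.degree := by omega
          have : coeff u p = 0 := MvPolynomial.coeff_eq_zero_of_totalDegree_lt
            (by rw [← sum_eq_degree] at hu'; simpa [Finsupp.sum] using hu')
          rw [if_pos hD, this, zero_mul]
      · rw [if_neg hD]
  rw [Finset.sum_congr rfl key]
  by_cases hD : d.degree = dp + dq
  · simp only [if_pos hD]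
  · simp only [if_neg hD, Finset.sum_const_zero]

lemma totalDegree_mul_eq {F : Type*} [Field F] {σ : Type*} {p q : MvPolynomial σ F}
    (hp : p ≠ 0) (hq : q ≠ 0) :
    (p * q).totalDegree = p.totalDegree + q.totalDegree := by
  refine le_antisymm (MvPolynomial.totalDegree_mul p q) ?_
  by_contra hlt
  push_neg at hlt
  have h0 : homogeneousComponent (p.totalDegree + q.totalDegree) (p * q) = 0 :=
    MvPolynomial.homogeneousComponent_eq_zero _ _ hlt
  rw [homogeneousComponent_mul_top] at h0
  exact mul_ne_zero (homogeneousComponent_totalDegree_ne_zero hp)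
    (homogeneousComponent_totalDegree_ne_zero hq) h0

lemma totalDegree_aeval_le {F : Type*} [Field F] {σ τ : Type*} [Fintype σ]
    (g : σ → MvPolynomial τ F) (hg : ∀ j, (g j).totalDegree ≤ 1) (p : MvPolynomial σ F) :
    (aeval g p).totalDegree ≤ p.totalDegree := by
  rw [MvPolynomial.aeval_def, MvPolynomial.eval₂_eq' (algebraMap F (MvPolynomial τ F)) g p]
  apply MvPolynomial.totalDegree_finsetSum_le
  intro d hd
  calc (algebraMap F (MvPolynomial τ F) (coeff d p) * ∏ i, g i ^ d i).totalDegree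
      ≤ (algebraMap F (MvPolynomial τ F) (coeff d p)).totalDegree
          + (∏ i, g i ^ d i).totalDegree := MvPolynomial.totalDegree_mul _ _
    _ ≤ 0 + ∑ i, (g i ^ d i).totalDegree := by
        refine add_le_add (le_of_eq ?_) (MvPolynomial.totalDegree_finset_prod _ _)
        rw [MvPolynomial.algebraMap_eq, MvPolynomial.totalDegree_C]
    _ ≤ ∑ i, d i := by
        rw [zero_add]
        refine Finset.sum_le_sum fun i _ => ?_
        calc (g i ^ d i).totalDegree ≤ d i * (g i).totalDegree :=
              MvPolynomial.totalDegree_pow _ _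
          _ ≤ d i * 1 := Nat.mul_le_mul_left _ (hg i)
          _ = d i := Nat.mul_one _
    _ ≤ p.totalDegree := by
        rw [show (∑ i, d i) = d.sum fun _ e => e from (Finsupp.sum_fintype d (fun _ e => e) fun _ => rfl).symm]
        exact MvPolynomial.le_totalDegree hd

end GAP

open MvPolynomial

namespace GAP

variable {F : Type*} [Field F]

/-- The defining linear polynomial of hyperplane `i`. -/
noncomputable def lin {m t : ℕ} (a : Fin t → Fin m → F) (b : Fin t → F) (i : Fin t) :
    MvPolynomial (Fin m) F :=
  (∑ j, C (a i j) * X j) - C (b i)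

lemma eval_lin {m t : ℕ} (a : Fin t → Fin m → F) (b : Fin t → F) (i : Fin t) (x : Fin m → F) :
    eval x (lin a b i) = (∑ j, a i j * x j) - b i := by
  simp [lin]

lemma coeff_single_lin {m t : ℕ} (a : Fin t → Fin m → F) (b : Fin t → F) (i : Fin t) (j : Fin m) :
    coeff (Finsupp.single j 1) (lin a b i) = a i j := by
  classical
  rw [lin, MvPolynomial.coeff_sub, MvPolynomial.coeff_sum]
  have h1 : ∀ j' : Fin m, coeff (Finsupp.single j 1) (C (a i j') * X j') =
      if j' = j then a i j' else 0 := by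
    intro j'
    rw [MvPolynomial.coeff_C_mul, MvPolynomial.coeff_X']
    by_cases h : j' = j
    · rw [if_pos (by rw [h]), if_pos h, mul_one]
    · rw [if_neg (fun hs => h (Finsupp.single_left_injective one_ne_zero hs)), if_neg h, mul_zero]
  rw [Finset.sum_congr rfl (fun j' _ => h1 j'), Finset.sum_ite_eq' Finset.univ j (fun j' => a i j'),
    if_pos (Finset.mem_univ j), MvPolynomial.coeff_C,
    if_neg (fun h => one_ne_zero (Finsupp.single_eq_zero.mp h.symm)), sub_zero]

lemma totalDegree_lin_le {m t : ℕ} (a : Fin t → Fin m → F) (b : Fin t → F) (i : Fin t) :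
    (lin a b i).totalDegree ≤ 1 := by
  refine (MvPolynomial.totalDegree_sub _ _).trans ?_
  rw [MvPolynomial.totalDegree_C]
  rw [sup_le_iff]
  refine ⟨MvPolynomial.totalDegree_finsetSum_le fun j _ => ?_, Nat.zero_le _⟩
  refine (MvPolynomial.totalDegree_mul _ _).trans ?_
  rw [MvPolynomial.totalDegree_C, MvPolynomial.totalDegree_X, zero_add]

lemma lin_ne_zero {m t : ℕ} {a : Fin t → Fin m → F} (b : Fin t → F) {i : Fin t}
    (hai : a i ≠ 0) : lin a b i ≠ 0 := by
  obtain ⟨j, hj⟩ := Function.ne_iff.mp hai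
  intro h0
  apply hj
  have := coeff_single_lin a b i j
  rw [h0] at this
  simpa using this.symm

lemma totalDegree_lin {m t : ℕ} {a : Fin t → Fin m → F} (b : Fin t → F) {i : Fin t}
    (hai : a i ≠ 0) : (lin a b i).totalDegree = 1 := by
  refine le_antisymm (totalDegree_lin_le a b i) ?_
  obtain ⟨j, hj⟩ := Function.ne_iff.mp hai
  have hmem : Finsupp.single j 1 ∈ (lin a b i).support := by
    rw [MvPolynomial.mem_support_iff, coeff_single_lin]
    simpa using hj
  have := MvPolynomial.le_totalDegree hmem
  rwa [Finsupp.sum_single_index rfl] at this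

/-- `x` lies on hyperplane `i`. -/
def onH {m t : ℕ} (a : Fin t → Fin m → F) (b : Fin t → F) (i : Fin t) (x : Fin m → F) : Prop :=
  ∑ j, a i j * x j = b i

/-- `x` is an `m`-wise intersection point. -/
def inT {m t : ℕ} (a : Fin t → Fin m → F) (b : Fin t → F) (x : Fin m → F) : Prop :=
  ∃ s : Finset (Fin t), s.card = m ∧ ∀ i ∈ s, onH a b i x

section System

variable {m t : ℕ} {a : Fin t → Fin m → F} {b : Fin t → F}

lemma T_finite (h1 : ∀ s : Finset (Fin t), s.card = m →
      ∃! x : Fin m → F, ∀ i ∈ s, onH a b i x) :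
    {x | inT a b x}.Finite := by
  classical
  have hsub : {x | inT a b x} ⊆
      ⋃ s : Finset (Fin t), {x | s.card = m ∧ ∀ i ∈ s, onH a b i x} := by
    rintro x ⟨s, hs, hx⟩
    exact Set.mem_iUnion.mpr ⟨s, hs, hx⟩
  refine Set.Finite.subset (Set.finite_iUnion fun s => ?_) hsub
  by_cases hs : s.card = m
  · obtain ⟨x0, _, hu⟩ := h1 s hs
    exact Set.Finite.subset (Set.finite_singleton x0) (fun x hx => hu x hx.2)
  · convert Set.finite_empty
    ext x
    simp only [Set.mem_setOf_eq, Set.mem_empty_iff_false, iff_false]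
    exact fun h => hs h.1

lemma point_unique
    (h2 : ∀ s : Finset (Fin t), s.card = m + 1 → ¬∃ x : Fin m → F, ∀ i ∈ s, onH a b i x)
    {s1 s2 : Finset (Fin t)} (hs1 : s1.card = m) (hs2 : s2.card = m) {x : Fin m → F}
    (hx1 : ∀ i ∈ s1, onH a b i x) (hx2 : ∀ i ∈ s2, onH a b i x) : s1 = s2 := by
  classical
  by_contra hne
  have hcard : m + 1 ≤ (s1 ∪ s2).card := by
    rcases Nat.lt_or_ge (s1 ∪ s2).card (m + 1) with h | h
    · have h1le : s1 ⊆ s1 ∪ s2 := Finset.subset_union_left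
      have h2le : s2 ⊆ s1 ∪ s2 := Finset.subset_union_right
      have e1 : s1 = s1 ∪ s2 := Finset.eq_of_subset_of_card_le h1le (by omega)
      have e2 : s2 = s1 ∪ s2 := Finset.eq_of_subset_of_card_le h2le (by omega)
      exact absurd (e1.trans e2.symm) hne
    · exact h
  obtain ⟨s3, hs3sub, hs3⟩ := Finset.exists_subset_card_eq hcard
  refine h2 s3 hs3 ⟨x, fun i hi => ?_⟩
  rcases Finset.mem_union.mp (hs3sub hi) with h | h
  · exact hx1 i h
  · exact hx2 i h

lemma card_T_ge (h1 : ∀ s : Finset (Fin t), s.card = m →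
      ∃! x : Fin m → F, ∀ i ∈ s, onH a b i x)
    (h2 : ∀ s : Finset (Fin t), s.card = m + 1 →
      ¬∃ x : Fin m → F, ∀ i ∈ s, onH a b i x) :
    t.choose m ≤ {x | inT a b x}.ncard := by
  classical
  set S : Set (Finset (Fin t)) := {s | s.card = m} with hS
  have hptex : ∀ s ∈ S, ∃ x : Fin m → F, ∀ i ∈ s, onH a b i x := fun s hs => (h1 s hs).exists
  choose pt hpt using hptex
  have hmaps : ∀ s (hs : s ∈ S), pt s hs ∈ {x | inT a b x} := fun s hs => ⟨s, hs, hpt s hs⟩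
  -- rewrite as ncard inequality
  have hScard : S.ncard = t.choose m := by
    have : S = ↑(Finset.univ.filter (fun s : Finset (Fin t) => s.card = m)) := by
      ext s; simp [hS]
    rw [this, Set.ncard_coe_finset, ← Fintype.card_subtype, Fintype.card_finset_len,
      Fintype.card_fin]
  rw [← hScard]
  have hfin : {x | inT a b x}.Finite := T_finite h1
  -- injectivity
  classical
  let f : Finset (Fin t) → (Fin m → F) := fun s => if hs : s ∈ S then pt s hs else 0
  refine Set.ncard_le_ncard_of_injOn f (fun s hs => by
      rw [show f s = pt s hs by simp [f, hs]]; exact hmaps s hs) ?_ hfin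
  intro s1 hs1 s2 hs2 hfe
  rw [show f s1 = pt s1 hs1 by simp [f, hs1], show f s2 = pt s2 hs2 by simp [f, hs2]] at hfe
  exact point_unique h2 hs1 hs2 (hpt s1 hs1) (hfe ▸ hpt s2 hs2)

open scoped Classical in
lemma card_onH_eq
    (h2 : ∀ s : Finset (Fin t), s.card = m + 1 →
      ¬∃ x : Fin m → F, ∀ i ∈ s, onH a b i x)
    {x : Fin m → F} (hx : inT a b x) :
    (Finset.univ.filter fun i => onH a b i x).card = m := by
  classical
  obtain ⟨s, hs, hsx⟩ := hx
  refine le_antisymm ?_ ?_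
  · by_contra h
    push_neg at h
    obtain ⟨s3, hsub, hcard⟩ := Finset.exists_subset_card_eq
      (s := Finset.univ.filter fun i => onH a b i x) (n := m + 1) (by omega)
    exact h2 s3 hcard ⟨x, fun i hi => (Finset.mem_filter.mp (hsub hi)).2⟩
  · have hss : s ⊆ Finset.univ.filter fun i => onH a b i x :=
      fun i hi => Finset.mem_filter.mpr ⟨Finset.mem_univ i, hsx i hi⟩
    have := Finset.card_le_card hss
    omega

lemma row_ne_zero (ht : m < t)
    (h1 : ∀ s : Finset (Fin t), s.card = m →
      ∃! x : Fin m → F, ∀ i ∈ s, onH a b i x)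
    (h2 : ∀ s : Finset (Fin t), s.card = m + 1 →
      ¬∃ x : Fin m → F, ∀ i ∈ s, onH a b i x)
    (hm : 0 < m) (i0 : Fin t) : a i0 ≠ 0 := by
  classical
  intro h0
  have honH : ∀ x : Fin m → F, onH a b i0 x ↔ b i0 = 0 := by
    intro x
    unfold onH
    rw [show ∑ j, a i0 j * x j = 0 by
      refine Finset.sum_eq_zero fun j _ => ?_
      rw [show a i0 j = 0 from congrFun h0 j, zero_mul]]
    exact eq_comm
  obtain ⟨s, hsub, hcard⟩ := Finset.exists_subset_card_eq
    (show m ≤ (Finset.univ.erase i0).card by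
      rw [Finset.card_erase_of_mem (Finset.mem_univ i0), Finset.card_univ, Fintype.card_fin]
      omega)
  obtain ⟨x, hx, _⟩ := h1 s hcard
  by_cases hb : b i0 = 0
  · refine h2 (insert i0 s) ?_ ⟨x, ?_⟩
    · rw [Finset.card_insert_of_notMem (fun hmem => (Finset.mem_erase.mp (hsub hmem)).1 rfl),
        hcard]
    · intro i hi
      rcases Finset.mem_insert.mp hi with rfl | hi
      · exact (honH x).mpr hb
      · exact hx i hi
  · obtain ⟨s', hsub', hcard'⟩ := Finset.exists_subset_card_eq
      (show m - 1 ≤ (Finset.univ.erase i0).card by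
        rw [Finset.card_erase_of_mem (Finset.mem_univ i0), Finset.card_univ, Fintype.card_fin]
        omega)
    have hins : (insert i0 s').card = m := by
      rw [Finset.card_insert_of_notMem (fun hmem => (Finset.mem_erase.mp (hsub' hmem)).1 rfl),
        hcard']
      omega
    obtain ⟨y, hy, _⟩ := h1 (insert i0 s') hins
    exact hb ((honH y).mp (hy i0 (Finset.mem_insert_self i0 s')))

end System

end GAP

open MvPolynomial

namespace GAP

variable {F : Type*} [Field F]

lemma optionEquivLeft_rename_some {σ : Type*} (p : MvPolynomial σ F) :
    optionEquivLeft F σ (rename some p) = Polynomial.C p := by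
  have hhom : ((optionEquivLeft F σ).toAlgHom.toRingHom).comp
        ((rename (some : σ → Option σ)).toRingHom) =
      (Polynomial.C : MvPolynomial σ F →+* Polynomial (MvPolynomial σ F)) := by
    refine MvPolynomial.ringHom_ext (fun r => ?_) (fun i => ?_)
    · simp only [RingHom.coe_comp, Function.comp_apply, AlgHom.toRingHom_eq_coe,
        RingHom.coe_coe, MvPolynomial.rename_C, AlgHom.coe_coe, AlgEquiv.coe_algHom]
      exact optionEquivLeft_C F σ r
    · simp only [RingHom.coe_comp, Function.comp_apply, AlgHom.toRingHom_eq_coe,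
        RingHom.coe_coe, MvPolynomial.rename_X, AlgHom.coe_coe, AlgEquiv.coe_algHom]
      exact optionEquivLeft_X_some F σ i
  exact RingHom.congr_fun hhom p

/-- The full substitution equivalence at position `j0`. -/
noncomputable def Phi {m' : ℕ} (j0 : Fin (m' + 1)) :
    MvPolynomial (Fin (m' + 1)) F ≃ₐ[F] Polynomial (MvPolynomial (Fin m') F) :=
  (renameEquiv F (finSuccEquiv' j0)).trans (optionEquivLeft F (Fin m'))

lemma Phi_X_self {m' : ℕ} (j0 : Fin (m' + 1)) :
    Phi (F := F) j0 (X j0) = Polynomial.X := by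
  simp only [Phi, AlgEquiv.trans_apply, renameEquiv_apply, rename_X, finSuccEquiv'_at]
  exact optionEquivLeft_X_none F (Fin m')

lemma Phi_X_succAbove {m' : ℕ} (j0 : Fin (m' + 1)) (k : Fin m') :
    Phi (F := F) j0 (X (j0.succAbove k)) = Polynomial.C (X k) := by
  simp only [Phi, AlgEquiv.trans_apply, renameEquiv_apply, rename_X, finSuccEquiv'_succAbove]
  exact optionEquivLeft_X_some F (Fin m') k

lemma Phi_C {m' : ℕ} (j0 : Fin (m' + 1)) (r : F) :
    Phi (F := F) j0 (C r) = Polynomial.C (C r) := by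
  simp only [Phi, AlgEquiv.trans_apply, renameEquiv_apply, rename_C]
  exact optionEquivLeft_C F (Fin m') r

lemma Phi_rename_succAbove {m' : ℕ} (j0 : Fin (m' + 1)) (p : MvPolynomial (Fin m') F) :
    Phi (F := F) j0 (rename j0.succAbove p) = Polynomial.C p := by
  simp only [Phi, AlgEquiv.trans_apply, renameEquiv_apply]
  rw [MvPolynomial.rename_rename]
  rw [show (⇑(finSuccEquiv' j0) ∘ j0.succAbove) = (some : Fin m' → Option (Fin m')) from
    funext fun k => finSuccEquiv'_succAbove j0 k]
  exact optionEquivLeft_rename_some p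

lemma eval_Phi_eq_aeval {m' : ℕ} (j0 : Fin (m' + 1)) (E0 : MvPolynomial (Fin m') F)
    (f : MvPolynomial (Fin (m' + 1)) F) :
    Polynomial.eval E0 (Phi (F := F) j0 f) = aeval (j0.insertNth E0 X) f := by
  have hhom : (Polynomial.evalRingHom E0).comp
        ((Phi (F := F) j0).toAlgHom.toRingHom) =
      ((aeval (j0.insertNth E0 X)).toRingHom :
        MvPolynomial (Fin (m' + 1)) F →+* MvPolynomial (Fin m') F) := by
    refine MvPolynomial.ringHom_ext (fun r => ?_) (Fin.succAboveCases j0 ?_ (fun k => ?_))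
    · simp only [RingHom.coe_comp, Function.comp_apply, AlgHom.toRingHom_eq_coe,
        RingHom.coe_coe, AlgHom.coe_coe, AlgEquiv.coe_algHom]
      rw [Phi_C]
      simp
    · simp only [RingHom.coe_comp, Function.comp_apply, AlgHom.toRingHom_eq_coe,
        RingHom.coe_coe, AlgHom.coe_coe, AlgEquiv.coe_algHom]
      rw [Phi_X_self]
      simp [Fin.insertNth_apply_same]
    · simp only [RingHom.coe_comp, Function.comp_apply, AlgHom.toRingHom_eq_coe,
        RingHom.coe_coe, AlgHom.coe_coe, AlgEquiv.coe_algHom]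
      rw [Phi_X_succAbove]
      simp [Fin.insertNth_apply_succAbove]
  exact RingHom.congr_fun hhom f

theorem dvd_of_aeval_insertNth_eq_zero {m' : ℕ} (j0 : Fin (m' + 1))
    (E0 : MvPolynomial (Fin m') F) (f : MvPolynomial (Fin (m' + 1)) F)
    (h : aeval (j0.insertNth E0 X) f = 0) :
    (X j0 - rename j0.succAbove E0) ∣ f := by
  have hroot : Polynomial.eval E0 (Phi (F := F) j0 f) = 0 := by
    rw [eval_Phi_eq_aeval, h]
  have hdvd : Polynomial.X - Polynomial.C E0 ∣ Phi (F := F) j0 f :=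
    Polynomial.dvd_iff_isRoot.mpr hroot
  obtain ⟨q, hq⟩ := hdvd
  refine ⟨(Phi (F := F) j0).symm q, (Phi (F := F) j0).injective ?_⟩
  rw [map_mul, map_sub, Phi_X_self, Phi_rename_succAbove, AlgEquiv.apply_symm_apply, hq]

/-- Evaluation compatibility: evaluating the substituted polynomial. -/
lemma eval_insertNth {m' : ℕ} (j0 : Fin (m' + 1)) (E0 : MvPolynomial (Fin m') F)
    (y : Fin m' → F) (f : MvPolynomial (Fin (m' + 1)) F) :
    eval (j0.insertNth (eval y E0) y) f = eval y (aeval (j0.insertNth E0 X) f) := by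
  have hhom : (eval (j0.insertNth (eval y E0) y) :
        MvPolynomial (Fin (m' + 1)) F →+* F) =
      (eval y : MvPolynomial (Fin m') F →+* F).comp
        ((aeval (j0.insertNth E0 X)).toRingHom :
          MvPolynomial (Fin (m' + 1)) F →+* MvPolynomial (Fin m') F) := by
    refine MvPolynomial.ringHom_ext (fun r => ?_) (Fin.succAboveCases j0 ?_ (fun k => ?_))
    · simp
    · simp [Fin.insertNth_apply_same]
    · simp [Fin.insertNth_apply_succAbove]
  exact RingHom.congr_fun hhom f

end GAP

open MvPolynomial

namespace GAP

variable {F : Type*} [Field F]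

set_option maxHeartbeats 1000000 in
lemma restrict {m' d t' : ℕ} (ht : (m' + 1) + d < t' + 1)
    {a : Fin (t' + 1) → Fin (m' + 1) → F} {b : Fin (t' + 1) → F}
    (h1 : ∀ s : Finset (Fin (t' + 1)), s.card = m' + 1 →
      ∃! x : Fin (m' + 1) → F, ∀ i ∈ s, onH a b i x)
    (h2 : ∀ s : Finset (Fin (t' + 1)), s.card = m' + 2 →
      ¬∃ x : Fin (m' + 1) → F, ∀ i ∈ s, onH a b i x)
    (i0 : Fin (t' + 1))
    (IH : ∀ (a' : Fin t' → Fin m' → F) (b' : Fin t' → F),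
      (∀ s : Finset (Fin t'), s.card = m' → ∃! y : Fin m' → F, ∀ r ∈ s, onH a' b' r y) →
      (∀ s : Finset (Fin t'), s.card = m' + 1 → ¬∃ y : Fin m' → F, ∀ r ∈ s, onH a' b' r y) →
      ∀ f' : MvPolynomial (Fin m') F, f' ≠ 0 → f'.totalDegree ≤ d →
        (t' - d).choose m' ≤ {y | inT a' b' y ∧ eval y f' ≠ 0}.ncard)
    (f : MvPolynomial (Fin (m' + 1)) F) (hf : ¬ lin a b i0 ∣ f) (hd : f.totalDegree ≤ d) :
    (t' - d).choose m' ≤ {x | inT a b x ∧ onH a b i0 x ∧ eval x f ≠ 0}.ncard := by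
  classical
  have hane : a i0 ≠ 0 := row_ne_zero (by omega) h1 h2 (by omega) i0
  obtain ⟨j0, hj0'⟩ := Function.ne_iff.mp hane
  have hα : a i0 j0 ≠ 0 := by simpa using hj0'
  set α : F := a i0 j0 with hαdef
  set E0 : MvPolynomial (Fin m') F :=
    C (b i0 / α) - ∑ k, C (a i0 (j0.succAbove k) / α) * X k with hE0
  set φm : (Fin m' → F) → (Fin (m' + 1) → F) :=
    fun y => j0.insertNth (eval y E0) y with hφm
  have hevalE0 : ∀ y : Fin m' → F,
      eval y E0 = b i0 / α - ∑ k, (a i0 (j0.succAbove k) / α) * y k := by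
    intro y; simp [hE0]
  have hmulE : ∀ y : Fin m' → F,
      α * eval y E0 = b i0 - ∑ k, a i0 (j0.succAbove k) * y k := by
    intro y
    rw [hevalE0, mul_sub, mul_div_cancel₀ _ hα, Finset.mul_sum]
    congr 1
    refine Finset.sum_congr rfl fun k _ => ?_
    rw [← mul_assoc, mul_div_cancel₀ _ hα]
  -- K1 : φm y lies on hyperplane i0
  have hK1 : ∀ y, onH a b i0 (φm y) := by
    intro y
    unfold onH
    rw [Fin.sum_univ_succAbove (fun j => a i0 j * φm y j) j0]
    simp only [hφm, Fin.insertNth_apply_same, Fin.insertNth_apply_succAbove]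
    rw [← hαdef, hmulE]
    ring
  -- the reduced system
  set ι : Fin t' → Fin (t' + 1) := i0.succAbove with hι
  set a' : Fin t' → Fin m' → F :=
    fun r k => a (ι r) (j0.succAbove k) - a (ι r) j0 * (a i0 (j0.succAbove k) / α) with ha'
  set b' : Fin t' → F := fun r => b (ι r) - a (ι r) j0 * (b i0 / α) with hb'
  have hsum : ∀ (y : Fin m' → F) (r : Fin t'),
      ∑ j, a (ι r) j * φm y j = (∑ k, a' r k * y k) + a (ι r) j0 * (b i0 / α) := by
    intro y r
    rw [Fin.sum_univ_succAbove (fun j => a (ι r) j * φm y j) j0]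
    simp only [hφm, Fin.insertNth_apply_same, Fin.insertNth_apply_succAbove]
    rw [hevalE0]
    simp only [ha', sub_mul]
    rw [Finset.sum_sub_distrib]
    have : ∑ k, a (ι r) j0 * (a i0 (j0.succAbove k) / α) * y k
        = a (ι r) j0 * ∑ k, a i0 (j0.succAbove k) / α * y k := by
      rw [Finset.mul_sum]; exact Finset.sum_congr rfl fun k _ => by ring
    rw [this]
    ring
  have hK2 : ∀ (y : Fin m' → F) (r : Fin t'), onH a' b' r y ↔ onH a b (ι r) (φm y) := by
    intro y r
    unfold onH
    rw [hsum y r]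
    simp only [hb']
    exact eq_sub_iff_add_eq
  have hK3 : ∀ x : Fin (m' + 1) → F, onH a b i0 x → φm (x ∘ j0.succAbove) = x := by
    intro x hx
    funext j
    revert j
    refine Fin.succAboveCases j0 ?_ (fun k => ?_)
    · simp only [hφm, Fin.insertNth_apply_same]
      refine mul_left_cancel₀ hα ?_
      rw [hmulE]
      unfold onH at hx
      rw [Fin.sum_univ_succAbove (fun j => a i0 j * x j) j0] at hx
      simp only [Function.comp_apply]
      linear_combination -hx
    · simp only [hφm, Fin.insertNth_apply_succAbove, Function.comp_apply]
  have hK4 : ∀ y, eval (φm y) f = eval y (aeval (j0.insertNth E0 X) f) :=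
    fun y => eval_insertNth j0 E0 y f
  have hK5 : Function.Injective φm := by
    intro y1 y2 h
    funext k
    have := congrFun h (j0.succAbove k)
    simpa only [hφm, Fin.insertNth_apply_succAbove] using this
  -- the substituted polynomial
  set f' : MvPolynomial (Fin m') F := aeval (j0.insertNth E0 X) f with hf'
  have hf'0 : f' ≠ 0 := by
    intro h0
    apply hf
    obtain ⟨q, hq⟩ := dvd_of_aeval_insertNth_eq_zero j0 E0 f h0
    have hlin : lin a b i0 = C α * (X j0 - rename j0.succAbove E0) := by
      rw [lin, Fin.sum_univ_succAbove (fun j => C (a i0 j) * X j) j0]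
      rw [hE0]
      rw [map_sub, rename_C, map_sum]
      simp only [map_mul, rename_C, rename_X]
      rw [mul_sub, mul_sub, Finset.mul_sum, ← C_mul, mul_div_cancel₀ _ hα]
      have : ∀ k : Fin m', C α * (C (a i0 (j0.succAbove k) / α) * X (j0.succAbove k))
          = C (a i0 (j0.succAbove k)) * (X (j0.succAbove k) : MvPolynomial (Fin (m' + 1)) F) := by
        intro k
        rw [← mul_assoc, ← C_mul, mul_div_cancel₀ _ hα]
      rw [Finset.sum_congr rfl fun k _ => this k]
      rw [← hαdef]
      ring
    refine ⟨C α⁻¹ * q, ?_⟩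
    rw [hlin, hq]
    rw [show C α * (X j0 - rename j0.succAbove E0) * (C α⁻¹ * q)
        = (C α * C α⁻¹) * ((X j0 - rename j0.succAbove E0) * q) by ring,
      ← C_mul, mul_inv_cancel₀ hα, C_1, one_mul]
  have hd' : f'.totalDegree ≤ d := by
    refine le_trans (totalDegree_aeval_le _ ?_ f) hd
    refine Fin.succAboveCases j0 ?_ (fun k => ?_)
    · rw [Fin.insertNth_apply_same]
      refine (MvPolynomial.totalDegree_sub _ _).trans ?_
      rw [MvPolynomial.totalDegree_C, sup_le_iff]
      refine ⟨Nat.zero_le _, MvPolynomial.totalDegree_finsetSum_le fun k _ => ?_⟩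
      refine (MvPolynomial.totalDegree_mul _ _).trans ?_
      rw [MvPolynomial.totalDegree_C, MvPolynomial.totalDegree_X, zero_add]
    · rw [Fin.insertNth_apply_succAbove, MvPolynomial.totalDegree_X]
  -- the embedding of index sets
  set emb : Fin t' ↪ Fin (t' + 1) := ⟨ι, Fin.succAbove_right_injective⟩ with hemb
  have hi0emb : ∀ s' : Finset (Fin t'), i0 ∉ s'.map emb := by
    intro s' hmem
    obtain ⟨r, _, hr⟩ := Finset.mem_map.mp hmem
    exact Fin.succAbove_ne i0 r hr
  have hcardins : ∀ s' : Finset (Fin t'), (insert i0 (s'.map emb)).card = s'.card + 1 := by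
    intro s'
    rw [Finset.card_insert_of_notMem (hi0emb s'), Finset.card_map]
  have hallins : ∀ (s' : Finset (Fin t')) (y : Fin m' → F), (∀ r ∈ s', onH a' b' r y) →
      ∀ i ∈ insert i0 (s'.map emb), onH a b i (φm y) := by
    intro s' y hy i hi
    rcases Finset.mem_insert.mp hi with rfl | hi
    · exact hK1 y
    · obtain ⟨r, hr, rfl⟩ := Finset.mem_map.mp hi
      exact (hK2 y r).mp (hy r hr)
  -- transfer of general position
  have h1' : ∀ s : Finset (Fin t'), s.card = m' →
      ∃! y : Fin m' → F, ∀ r ∈ s, onH a' b' r y := by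
    intro s' hs'
    obtain ⟨x, hx, hxu⟩ := h1 (insert i0 (s'.map emb)) (by rw [hcardins, hs'])
    have hxi0 : onH a b i0 x := hx i0 (Finset.mem_insert_self _ _)
    refine ⟨x ∘ j0.succAbove, ?_, ?_⟩
    · intro r hr
      rw [hK2, hK3 x hxi0]
      exact hx (ι r) (Finset.mem_insert_of_mem (Finset.mem_map_of_mem emb hr))
    · intro y hy
      have hxy : φm y = x := hxu (φm y) (hallins s' y hy)
      funext k
      have := congrFun hxy (j0.succAbove k)
      simpa only [hφm, Fin.insertNth_apply_succAbove, Function.comp_apply] using this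
  have h2' : ∀ s : Finset (Fin t'), s.card = m' + 1 →
      ¬∃ y : Fin m' → F, ∀ r ∈ s, onH a' b' r y := by
    rintro s' hs' ⟨y, hy⟩
    exact h2 (insert i0 (s'.map emb)) (by rw [hcardins, hs'])
      ⟨φm y, hallins s' y hy⟩
  -- apply the inductive hypothesis
  have hmain := IH a' b' h1' h2' f' hf'0 hd'
  -- transfer the count
  set Z' : Set (Fin m' → F) := {y | inT a' b' y ∧ eval y f' ≠ 0} with hZ'
  set Z0 : Set (Fin (m' + 1) → F) := {x | inT a b x ∧ onH a b i0 x ∧ eval x f ≠ 0} with hZ0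
  have himg : φm '' Z' ⊆ Z0 := by
    rintro _ ⟨y, ⟨⟨s', hs'c, hs'⟩, hev⟩, rfl⟩
    refine ⟨⟨insert i0 (s'.map emb), by rw [hcardins, hs'c], hallins s' y hs'⟩, hK1 y, ?_⟩
    rw [hK4 y]
    exact hev
  have hZ0fin : Z0.Finite :=
    Set.Finite.subset (T_finite h1) (fun x hx => hx.1)
  calc (t' - d).choose m' ≤ Z'.ncard := hmain
    _ = (φm '' Z').ncard := (Set.ncard_image_of_injective Z' hK5).symm
    _ ≤ Z0.ncard := Set.ncard_le_ncard himg hZ0fin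

end GAP

open MvPolynomial

namespace GAP

variable {F : Type*} [Field F]

set_option maxHeartbeats 1000000 in
theorem key (N : ℕ) : ∀ (m d t : ℕ), m + d ≤ N → m + d < t →
    ∀ (a : Fin t → Fin m → F) (b : Fin t → F),
    (∀ s : Finset (Fin t), s.card = m → ∃! x : Fin m → F, ∀ i ∈ s, onH a b i x) →
    (∀ s : Finset (Fin t), s.card = m + 1 → ¬∃ x : Fin m → F, ∀ i ∈ s, onH a b i x) →
    ∀ f : MvPolynomial (Fin m) F, f ≠ 0 → f.totalDegree ≤ d →
    (t - d).choose m ≤ {x | inT a b x ∧ eval x f ≠ 0}.ncard := by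
  induction N with
  | zero =>
    intro m d t hN ht a b h1 h2 f hf hd
    -- here m = 0 and d = 0
    have hm : m = 0 := by omega
    have hd0 : d = 0 := by omega
    subst hm hd0
    -- every x is in T, f is a nonzero constant
    obtain ⟨c, rfl⟩ := MvPolynomial.C_surjective (Fin 0) f
    have hc : c ≠ 0 := fun h => hf (by rw [h, map_zero])
    have hset : {x : Fin 0 → F | inT a b x ∧ eval x (C c) ≠ 0} = Set.univ := by
      ext x
      simp only [Set.mem_setOf_eq, Set.mem_univ, iff_true]
      exact ⟨⟨∅, rfl, fun i hi => absurd hi (Finset.notMem_empty i)⟩, by simpa using hc⟩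
    rw [hset, Set.ncard_univ, Nat.card_unique, Nat.sub_zero, Nat.choose_zero_right]
  | succ N IH =>
    intro m d t hN ht a b h1 h2 f hf hd
    by_cases hd0 : d = 0
    · subst hd0
      have hfc : f = C (coeff 0 f) := by
        ext d'
        by_cases hd' : d' = 0
        · subst hd'; rw [MvPolynomial.coeff_C, if_pos rfl]
        · rw [MvPolynomial.coeff_C, if_neg (Ne.symm hd')]
          refine MvPolynomial.coeff_eq_zero_of_totalDegree_lt ?_
          have h1' : f.totalDegree = 0 := Nat.le_zero.mp hd
          have h2' : d'.degree ≠ 0 := fun h => hd' ((Finsupp.degree_eq_zero_iff d').mp h)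
          rw [h1']
          have : d'.degree = ∑ i ∈ d'.support, d' i := rfl
          omega
      have hc : coeff 0 f ≠ 0 := fun h => hf (by rw [hfc, h, map_zero])
      have hset : {x : Fin m → F | inT a b x ∧ eval x f ≠ 0} = {x | inT a b x} := by
        ext x
        simp only [Set.mem_setOf_eq, and_iff_left_iff_imp]
        intro _
        rw [hfc]
        simpa using hc
      rw [hset, Nat.sub_zero]
      exact card_T_ge h1 h2
    · by_cases hm0 : m = 0
      · subst hm0
        obtain ⟨c, rfl⟩ := MvPolynomial.C_surjective (Fin 0) f
        have hc : c ≠ 0 := fun h => hf (by rw [h, map_zero])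
        have hset : {x : Fin 0 → F | inT a b x ∧ eval x (C c) ≠ 0} = Set.univ := by
          ext x
          simp only [Set.mem_setOf_eq, Set.mem_univ, iff_true]
          exact ⟨⟨∅, rfl, fun i hi => absurd hi (Finset.notMem_empty i)⟩, by simpa using hc⟩
        rw [hset, Set.ncard_univ, Nat.card_unique, Nat.choose_zero_right]
      · -- main case : m = m' + 1, d = d' + 1, t = t' + 1
        obtain ⟨m', rfl⟩ : ∃ m', m = m' + 1 := ⟨m - 1, by omega⟩
        obtain ⟨d', rfl⟩ : ∃ d', d = d' + 1 := ⟨d - 1, by omega⟩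
        obtain ⟨t', rfl⟩ : ∃ t', t = t' + 1 := ⟨t - 1, by omega⟩
        clear hd0 hm0
        by_cases hdvd : ∃ i0, lin a b i0 ∣ f
        · -- f vanishes identically on hyperplane i0
          obtain ⟨i0, g, rfl⟩ := hdvd
          have hane : a i0 ≠ 0 := row_ne_zero (by omega) h1 h2 (by omega) i0
          have hg0 : g ≠ 0 := right_ne_zero_of_mul hf
          have hdegf : (lin a b i0 * g).totalDegree = 1 + g.totalDegree := by
            rw [totalDegree_mul_eq (lin_ne_zero b hane) hg0, totalDegree_lin b hane]
          have hdg : g.totalDegree ≤ d' := by omega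
          -- reduced system with t' hyperplanes
          set emb : Fin t' ↪ Fin (t' + 1) :=
            ⟨i0.succAbove, Fin.succAbove_right_injective⟩ with hemb
          set a1 : Fin t' → Fin (m' + 1) → F := fun r => a (emb r) with ha1
          set b1 : Fin t' → F := fun r => b (emb r) with hb1
          have honH1 : ∀ (r : Fin t') (x : Fin (m' + 1) → F),
              onH a1 b1 r x ↔ onH a b (emb r) x := fun r x => Iff.rfl
          have h1'' : ∀ s : Finset (Fin t'), s.card = m' + 1 →
              ∃! x : Fin (m' + 1) → F, ∀ r ∈ s, onH a1 b1 r x := by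
            intro s' hs'
            obtain ⟨x, hx, hxu⟩ := h1 (s'.map emb) (by rw [Finset.card_map]; exact hs')
            refine ⟨x, fun r hr => hx _ (Finset.mem_map_of_mem emb hr), fun y hy => ?_⟩
            refine hxu y fun i hi => ?_
            obtain ⟨r, hr, rfl⟩ := Finset.mem_map.mp hi
            exact hy r hr
          have h2'' : ∀ s : Finset (Fin t'), s.card = m' + 1 + 1 →
              ¬∃ x : Fin (m' + 1) → F, ∀ r ∈ s, onH a1 b1 r x := by
            rintro s' hs' ⟨x, hx⟩
            refine h2 (s'.map emb) (by rw [Finset.card_map]; exact hs') ⟨x, fun i hi => ?_⟩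
            obtain ⟨r, hr, rfl⟩ := Finset.mem_map.mp hi
            exact hx r hr
          have hmain := IH (m' + 1) d' t' (by omega) (by omega) a1 b1 h1'' h2'' g hg0 hdg
          have hsubset : {x | inT a1 b1 x ∧ eval x g ≠ 0} ⊆
              {x | inT a b x ∧ eval x (lin a b i0 * g) ≠ 0} := by
            rintro x ⟨⟨s', hs'c, hs'⟩, hev⟩
            have hi0s : i0 ∉ s'.map emb := by
              intro hmem
              obtain ⟨r, _, hr⟩ := Finset.mem_map.mp hmem
              exact Fin.succAbove_ne i0 r hr
            have hmem : ∀ i ∈ s'.map emb, onH a b i x := by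
              intro i hi
              obtain ⟨r, hr, rfl⟩ := Finset.mem_map.mp hi
              exact hs' r hr
            refine ⟨⟨s'.map emb, by rw [Finset.card_map]; exact hs'c, hmem⟩, ?_⟩
            rw [map_mul]
            refine mul_ne_zero ?_ hev
            rw [eval_lin]
            intro h0
            have honHx : onH a b i0 x := sub_eq_zero.mp h0
            refine h2 (insert i0 (s'.map emb))
              (by rw [Finset.card_insert_of_notMem hi0s, Finset.card_map, hs'c]) ⟨x, ?_⟩
            intro i hi
            rcases Finset.mem_insert.mp hi with rfl | hi
            · exact honHx
            · exact hmem i hi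
          have hfin : {x | inT a b x ∧ eval x (lin a b i0 * g) ≠ 0}.Finite :=
            Set.Finite.subset (T_finite h1) (fun x hx => hx.1)
          have hrw : t' + 1 - (d' + 1) = t' - d' := by omega
          rw [hrw]
          exact le_trans hmain (Set.ncard_le_ncard hsubset hfin)
        · -- f vanishes on no hyperplane : count per hyperplane and double count
          push_neg at hdvd
          classical
          set d := d' + 1 with hddef
          have hres : ∀ i0 : Fin (t' + 1), (t' - d).choose m' ≤
              {x | inT a b x ∧ onH a b i0 x ∧ eval x f ≠ 0}.ncard := by
            intro i0
            refine restrict (by omega) h1 h2 i0 ?_ f (hdvd i0) hd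
            intro a' b' h1' h2' f' hf' hd'
            exact IH m' d t' (by omega) (by omega) a' b' h1' h2' f' hf' hd'
          set Z : Set (Fin (m' + 1) → F) := {x | inT a b x ∧ eval x f ≠ 0} with hZ
          have hZfin : Z.Finite := Set.Finite.subset (T_finite h1) (fun x hx => hx.1)
          set ZF : Finset (Fin (m' + 1) → F) := hZfin.toFinset with hZF
          have hcount : ∀ i0 : Fin (t' + 1),
              (t' - d).choose m' ≤ (ZF.filter fun x => onH a b i0 x).card := by
            intro i0
            refine le_trans (hres i0) ?_
            rw [← Set.ncard_coe_finset]
            refine Set.ncard_le_ncard ?_ (Finset.finite_toSet _)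
            rintro x ⟨h1x, h2x, h3x⟩
            simp only [Finset.coe_filter, Set.mem_setOf_eq, hZF, Set.Finite.mem_toFinset]
            exact ⟨⟨h1x, h3x⟩, h2x⟩
          have hdouble : ∑ i0 : Fin (t' + 1), (ZF.filter fun x => onH a b i0 x).card
              = ∑ x ∈ ZF, (Finset.univ.filter fun i0 => onH a b i0 x).card := by
            simp_rw [Finset.card_filter]
            exact Finset.sum_comm
          have hexact : ∀ x ∈ ZF, (Finset.univ.filter fun i0 => onH a b i0 x).card = m' + 1 := by
            intro x hx
            have hxZ : x ∈ Z := (Set.Finite.mem_toFinset hZfin).mp hx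
            exact card_onH_eq h2 hxZ.1
          have hge : (t' + 1) * ((t' - d).choose m') ≤ (m' + 1) * ZF.card := by
            calc (t' + 1) * ((t' - d).choose m')
                = ∑ _i0 : Fin (t' + 1), (t' - d).choose m' := by
                  rw [Finset.sum_const, Finset.card_univ, Fintype.card_fin, smul_eq_mul]
              _ ≤ ∑ i0 : Fin (t' + 1), (ZF.filter fun x => onH a b i0 x).card :=
                  Finset.sum_le_sum fun i0 _ => hcount i0
              _ = ∑ x ∈ ZF, (Finset.univ.filter fun i0 => onH a b i0 x).card := hdouble
              _ = ∑ _x ∈ ZF, (m' + 1) := Finset.sum_congr rfl hexact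
              _ = (m' + 1) * ZF.card := by rw [Finset.sum_const, smul_eq_mul, mul_comm]
          have hbin : (m' + 1) * ((t' + 1 - d).choose (m' + 1))
              ≤ (t' + 1) * ((t' - d).choose m') := by
            have h1b : t' + 1 - d = (t' - d) + 1 := by omega
            rw [h1b]
            have hsucc : (t' - d + 1) * ((t' - d).choose m')
                = (t' - d + 1).choose (m' + 1) * (m' + 1) := by
              simpa [Nat.succ_eq_add_one] using Nat.add_one_mul_choose_eq (t' - d) m'
            calc (m' + 1) * ((t' - d + 1).choose (m' + 1))
                = (t' - d + 1) * ((t' - d).choose m') := by rw [hsucc]; ring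
              _ ≤ (t' + 1) * ((t' - d).choose m') :=
                  Nat.mul_le_mul_right _ (by omega)
          have hfinal : (m' + 1) * ((t' + 1 - d).choose (m' + 1)) ≤ (m' + 1) * ZF.card :=
            le_trans hbin hge
          have : (t' + 1 - d).choose (m' + 1) ≤ ZF.card :=
            Nat.le_of_mul_le_mul_left hfinal (by omega)
          rwa [show Z.ncard = ZF.card from Set.ncard_eq_toFinset_card Z hZfin]

end GAP

open MvPolynomial

namespace GAP

variable {F : Type*} [Field F]

lemma encard_le_of_ncard_le {α : Type*} {S : Set α} (hfin : S.Finite) (k : ℕ)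
    (h : k ≤ S.ncard) : (k : ℕ∞) ≤ S.encard := by
  have := hfin.fintype
  rw [Set.encard_eq_coe_toFinset_card S]
  rw [Set.ncard_eq_toFinset_card' S] at h
  exact_mod_cast h

end GAP

/-- GAP codes have distance at least `binom(t-d, m)`: every nonzero
polynomial of total degree at most `d` is nonzero at at least `binom(t-d, m)` of the
`m`-wise intersection points of `t > m + d` hyperplanes in general position; hence the
evaluation code on these points has minimum Hamming distance at least `binom(t-d, m)`. -/
theorem stmt_2 {F : Type*} [Field F] (m d t : ℕ) (ht : m + d < t)
    (a : Fin t → Fin m → F) (b : Fin t → F) (ha : ∀ i, a i ≠ 0)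
    (H : Fin t → Set (Fin m → F))
    (hH : ∀ i, H i = {x | ∑ j, a i j * x j = b i})
    (hgen1 : ∀ s : Finset (Fin t), s.card = m → ∃! x : Fin m → F, ∀ i ∈ s, x ∈ H i)
    (hgen2 : ∀ s : Finset (Fin t), s.card = m + 1 → ¬ ∃ x : Fin m → F, ∀ i ∈ s, x ∈ H i)
    (T : Set (Fin m → F))
    (hT : T = {x | ∃ s : Finset (Fin t), s.card = m ∧ ∀ i ∈ s, x ∈ H i}) :
    (∀ f : MvPolynomial (Fin m) F, f ≠ 0 → f.totalDegree ≤ d →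
      ((t - d).choose m : ℕ∞) ≤ {x ∈ T | MvPolynomial.eval x f ≠ 0}.encard) ∧
    (∀ f g : MvPolynomial (Fin m) F, f.totalDegree ≤ d → g.totalDegree ≤ d → f ≠ g →
      ((t - d).choose m : ℕ∞) ≤
        {x ∈ T | MvPolynomial.eval x f ≠ MvPolynomial.eval x g}.encard) := by
  have hmemH : ∀ (i : Fin t) (x : Fin m → F), x ∈ H i ↔ GAP.onH a b i x := by
    intro i x
    rw [hH i]
    exact Iff.rfl
  have h1 : ∀ s : Finset (Fin t), s.card = m →
      ∃! x : Fin m → F, ∀ i ∈ s, GAP.onH a b i x := by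
    intro s hs
    obtain ⟨x, hx, hxu⟩ := hgen1 s hs
    exact ⟨x, fun i hi => (hmemH i x).mp (hx i hi),
      fun y hy => hxu y fun i hi => (hmemH i y).mpr (hy i hi)⟩
  have h2 : ∀ s : Finset (Fin t), s.card = m + 1 →
      ¬∃ x : Fin m → F, ∀ i ∈ s, GAP.onH a b i x := by
    rintro s hs ⟨x, hx⟩
    exact hgen2 s hs ⟨x, fun i hi => (hmemH i x).mpr (hx i hi)⟩
  have hTmem : ∀ x : Fin m → F, x ∈ T ↔ GAP.inT a b x := by
    intro x
    rw [hT]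
    constructor
    · rintro ⟨s, hs, hx⟩
      exact ⟨s, hs, fun i hi => (hmemH i x).mp (hx i hi)⟩
    · rintro ⟨s, hs, hx⟩
      exact ⟨s, hs, fun i hi => (hmemH i x).mpr (hx i hi)⟩
  have main : ∀ f : MvPolynomial (Fin m) F, f ≠ 0 → f.totalDegree ≤ d →
      ((t - d).choose m : ℕ∞) ≤ {x ∈ T | MvPolynomial.eval x f ≠ 0}.encard := by
    intro f hf hdeg
    have hset : {x ∈ T | MvPolynomial.eval x f ≠ 0}
        = {x | GAP.inT a b x ∧ MvPolynomial.eval x f ≠ 0} := by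
      ext x
      rw [Set.mem_sep_iff, Set.mem_setOf_eq]
      exact and_congr_left fun _ => hTmem x
    rw [hset]
    have hkey := GAP.key (m + d) m d t le_rfl ht a b h1 h2 f hf hdeg
    refine GAP.encard_le_of_ncard_le ?_ _ hkey
    exact Set.Finite.subset (GAP.T_finite h1) (fun x hx => hx.1)
  refine ⟨main, ?_⟩
  intro f g hdf hdg hne
  have hsub : f - g ≠ 0 := sub_ne_zero_of_ne hne
  have hdsub : (f - g).totalDegree ≤ d :=
    (MvPolynomial.totalDegree_sub f g).trans (sup_le hdf hdg)
  have hset2 : {x ∈ T | MvPolynomial.eval x f ≠ MvPolynomial.eval x g}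
      = {x ∈ T | MvPolynomial.eval x (f - g) ≠ 0} := by
    ext x
    rw [Set.mem_sep_iff, Set.mem_sep_iff]
    refine and_congr_right fun _ => ?_
    rw [map_sub, sub_ne_zero]
  rw [hset2]
  exact main (f - g) hsub hdsub
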